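/- The space of harmonic tropical morphisms from a fixed simple tropical curve C with n leaves to ℝ^m, modulo translations of ℝ^m, is a real vector space of dimension m(n−1). -/

import Mathlib

open Finset

section GraphSetup

variable {V D : Type} [Fintype V] [Fintype D] [DecidableEq V] [DecidableEq D]

/-- A loop in a graph given by darts: a nonempty cyclic chain of darts, injective on
(unoriented) edges.  `rev` is orientation reversal and `tail` the initial vertex of
a dart; the head of `d` is `tail (rev d)`. -/
def IsLoop (rev : D → D) (tail : D → V) (c : List D) : Prop :=
  c ≠ [] ∧ c.Nodup ∧ (∀ d ∈ c, rev d ∉ c) ∧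
    c.Chain' (fun d d' => tail (rev d) = tail d') ∧
    ∀ a ∈ c.head?, ∀ b ∈ c.getLast?, tail (rev b) = tail a

/-- The integral of a 1-form `ω` along a loop `c`: `Σ l(e)·ω(e⃗)`. -/
def loopIntegral (len : D → ℝ) (ω : D → ℝ) (c : List D) : ℝ :=
  (c.map fun d => len d * ω d).sum

/-- A 1-form on the graph: antisymmetric under orientation reversal and satisfying
the Kirchhoff balancing condition at every internal (non-leaf) vertex. -/
def IsBalanced (rev : D → D) (tail : D → V) (isLeaf : V → Prop) [DecidablePred isLeaf]
    (ω : D → ℝ) : Prop :=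
  (∀ d, ω (rev d) = - ω d) ∧
    ∀ v, ¬ isLeaf v → ∑ d ∈ univ.filter (fun d => tail d = v), ω d = 0

/-- A 1-form is exact if its integral over every loop vanishes. -/
def IsExact (rev : D → D) (tail : D → V) (len : D → ℝ) (ω : D → ℝ) : Prop :=
  ∀ c : List D, IsLoop rev tail c → loopIntegral len ω c = 0

/-- A 1-form is holomorphic if its residues (its values on leaf edges) all vanish. -/
def IsHolomorphic (tail : D → V) (isLeaf : V → Prop) (ω : D → ℝ) : Prop :=
  ∀ d, isLeaf (tail d) → ω d = 0

/-- Connectivity of the graph: any two vertices are joined by a chain of darts. -/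
def GraphConnected (rev : D → D) (tail : D → V) : Prop :=
  ∀ v w : V, Relation.ReflTransGen (fun x y => ∃ d, tail d = x ∧ tail (rev d) = y) v w

end GraphSetup
section Submodules
set_option linter.unusedSectionVars false

variable {V D : Type} [Fintype V] [Fintype D] [DecidableEq V] [DecidableEq D]

theorem loopIntegral_add (len a b : D → ℝ) (c : List D) :
    loopIntegral len (a + b) c = loopIntegral len a c + loopIntegral len b c := by
  induction c with
  | nil => simp [loopIntegral]
  | cons d t ih =>
    simp only [loopIntegral, List.map_cons, List.sum_cons] at ih ⊢
    rw [ih, Pi.add_apply]; ring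

theorem loopIntegral_smul (len : D → ℝ) (r : ℝ) (a : D → ℝ) (c : List D) :
    loopIntegral len (r • a) c = r * loopIntegral len a c := by
  induction c with
  | nil => simp [loopIntegral]
  | cons d t ih =>
    simp only [loopIntegral, List.map_cons, List.sum_cons] at ih ⊢
    rw [ih, Pi.smul_apply, smul_eq_mul]; ring

/-- The space `Ω(C)` of 1-forms (balanced, antisymmetric). -/
def OmegaSub (rev : D → D) (tail : D → V) (isLeaf : V → Prop) [DecidablePred isLeaf] :
    Submodule ℝ (D → ℝ) where
  carrier := {ω | IsBalanced rev tail isLeaf ω}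
  zero_mem' := ⟨fun d => by simp, fun v hv => by simp⟩
  add_mem' := by
    rintro a b ⟨ha1, ha2⟩ ⟨hb1, hb2⟩
    refine ⟨fun d => ?_, fun v hv => ?_⟩
    · simp only [Pi.add_apply, ha1 d, hb1 d]; ring
    · simp only [Pi.add_apply, Finset.sum_add_distrib, ha2 v hv, hb2 v hv, add_zero]
  smul_mem' := by
    rintro r a ⟨ha1, ha2⟩
    refine ⟨fun d => ?_, fun v hv => ?_⟩
    · simp only [Pi.smul_apply, smul_eq_mul, ha1 d]; ring
    · simp only [Pi.smul_apply, smul_eq_mul, ← Finset.mul_sum, ha2 v hv, mul_zero]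

/-- The space `Ω₀(C)` of exact 1-forms. -/
def Omega0Sub (rev : D → D) (tail : D → V) (isLeaf : V → Prop) [DecidablePred isLeaf]
    (len : D → ℝ) : Submodule ℝ (D → ℝ) where
  carrier := {ω | IsBalanced rev tail isLeaf ω ∧ IsExact rev tail len ω}
  zero_mem' := ⟨(OmegaSub rev tail isLeaf).zero_mem, fun c _ => by simp [loopIntegral]⟩
  add_mem' := by
    rintro a b ⟨ha, ha'⟩ ⟨hb, hb'⟩
    exact ⟨(OmegaSub rev tail isLeaf).add_mem ha hb,
      fun c hc => by rw [loopIntegral_add, ha' c hc, hb' c hc, add_zero]⟩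
  smul_mem' := by
    rintro r a ⟨ha, ha'⟩
    exact ⟨(OmegaSub rev tail isLeaf).smul_mem r ha,
      fun c hc => by rw [loopIntegral_smul, ha' c hc, mul_zero]⟩

/-- The space `Ω_H(C)` of holomorphic 1-forms (all residues zero). -/
def OmegaHSub (rev : D → D) (tail : D → V) (isLeaf : V → Prop) [DecidablePred isLeaf] :
    Submodule ℝ (D → ℝ) where
  carrier := {ω | IsBalanced rev tail isLeaf ω ∧ IsHolomorphic tail isLeaf ω}
  zero_mem' := ⟨(OmegaSub rev tail isLeaf).zero_mem, fun d _ => rfl⟩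
  add_mem' := by
    rintro a b ⟨ha, ha'⟩ ⟨hb, hb'⟩
    exact ⟨(OmegaSub rev tail isLeaf).add_mem ha hb,
      fun d hd => by simp [Pi.add_apply, ha' d hd, hb' d hd]⟩
  smul_mem' := by
    rintro r a ⟨ha, ha'⟩
    exact ⟨(OmegaSub rev tail isLeaf).smul_mem r ha,
      fun d hd => by simp [Pi.smul_apply, ha' d hd]⟩

end Submodules
section Harm

variable {V D : Type} [Fintype V] [Fintype D] [DecidableEq V] [DecidableEq D]

/-- The space of harmonic tropical morphisms `C → ℝ^m` modulo translations,
identified with the space of balanced exact `ℝ^m`-valued 1-forms (the gradient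
data of the morphisms). -/
def HarmSub (rev : D → D) (tail : D → V) (isLeaf : V → Prop) [DecidablePred isLeaf]
    (len : D → ℝ) (m : ℕ) : Submodule ℝ (D → Fin m → ℝ) where
  carrier := {ω | ∀ j, (fun d => ω d j) ∈ Omega0Sub rev tail isLeaf len}
  zero_mem' := fun j => (Omega0Sub rev tail isLeaf len).zero_mem
  add_mem' := by
    intro a b ha hb j
    exact (Omega0Sub rev tail isLeaf len).add_mem (ha j) (hb j)
  smul_mem' := by
    intro r a ha j
    exact (Omega0Sub rev tail isLeaf len).smul_mem r (ha j)

end Harm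


section AuxProof
set_option linter.unusedSectionVars false
variable {V D : Type} [Fintype V] [Fintype D] [DecidableEq V] [DecidableEq D]

lemma telescope_sum (rev : D → D) (tail : D → V) (f : V → ℝ) :
    ∀ (c : List D) (d : D),
      (d :: c).Chain' (fun d d' => tail (rev d) = tail d') →
      ((d :: c).map fun e => f (tail (rev e)) - f (tail e)).sum
        = f (tail (rev ((d :: c).getLast (List.cons_ne_nil _ _)))) - f (tail d)
  | [], d, _ => by simp
  | d' :: c, d, h => by
    simp only [List.Chain', List.isChain_cons_cons] at h
    have ih := telescope_sum rev tail f c d' h.2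
    simp only [List.map_cons, List.sum_cons] at ih ⊢
    rw [List.getLast_cons (List.cons_ne_nil d' c), ih, h.1]
    ring

noncomputable def gradMap (rev : D → D) (tail : D → V) (len : D → ℝ) :
    (V → ℝ) →ₗ[ℝ] (D → ℝ) where
  toFun f d := (f (tail (rev d)) - f (tail d)) / len d
  map_add' f g := by funext d; simp only [Pi.add_apply]; ring
  map_smul' r f := by funext d; simp only [Pi.smul_apply, smul_eq_mul, RingHom.id_apply]; ring

noncomputable def lapMap (rev : D → D) (tail : D → V) (isLeaf : V → Prop) [DecidablePred isLeaf]
    (len : D → ℝ) : (V → ℝ) →ₗ[ℝ] ({v : V // ¬ isLeaf v} → ℝ) where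
  toFun f v := ∑ d ∈ univ.filter (fun d => tail d = v.1), (f (tail (rev d)) - f (tail d)) / len d
  map_add' f g := by
    funext v
    simp only [Pi.add_apply, ← Finset.sum_add_distrib]
    exact Finset.sum_congr rfl fun d _ => by ring
  map_smul' r f := by
    funext v
    simp only [Pi.smul_apply, smul_eq_mul, RingHom.id_apply, Finset.mul_sum]
    exact Finset.sum_congr rfl fun d _ => by ring

lemma balanced_exact_res_zero (rev : D → D) (tail : D → V) (isLeaf : V → Prop)
    [DecidablePred isLeaf] (len : D → ℝ)
    (hlen : ∀ d, 0 < len d)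
    (ω : D → ℝ) (hanti : ∀ d, ω (rev d) = - ω d)
    (hbal : ∀ v, ¬ isLeaf v → ∑ d ∈ univ.filter (fun d => tail d = v), ω d = 0)
    (hexact : IsExact rev tail len ω)
    (hres : ∀ d, isLeaf (tail d) → ω d = 0) : ω = 0 := by
  by_contra hne
  obtain ⟨d₀, hd₀⟩ : ∃ d, 0 < ω d := by
    have h1 : ∃ d, ω d ≠ 0 := by
      by_contra h; push_neg at h; exact hne (funext h)
    obtain ⟨d, hd⟩ := h1
    rcases lt_or_gt_of_ne hd with h | h
    · exact ⟨rev d, by rw [hanti]; linarith⟩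
    · exact ⟨d, h⟩
  have step : ∀ d : D, 0 < ω d → ∃ d', 0 < ω d' ∧ tail d' = tail (rev d) := by
    intro d hd
    have hleafnot : ¬ isLeaf (tail (rev d)) := by
      intro h
      have := hres (rev d) h
      rw [hanti] at this; linarith
    have hsum := hbal _ hleafnot
    by_contra hc
    push_neg at hc
    have hlt : ∑ d' ∈ univ.filter (fun d' => tail d' = tail (rev d)), ω d'
        < ∑ _d' ∈ univ.filter (fun d' => tail d' = tail (rev d)), (0:ℝ) := by
      apply Finset.sum_lt_sum
      · intro i hi
        by_contra hpos
        push_neg at hpos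
        exact hc i hpos (Finset.mem_filter.mp hi).2
      · refine ⟨rev d, Finset.mem_filter.mpr ⟨Finset.mem_univ _, rfl⟩, by rw [hanti]; linarith⟩
    rw [hsum] at hlt
    simp at hlt
  let g : {d : D // 0 < ω d} → {d : D // 0 < ω d} := fun d =>
    ⟨Classical.choose (step d.1 d.2), (Classical.choose_spec (step d.1 d.2)).1⟩
  have hg : ∀ d, tail (g d).1 = tail (rev d.1) := fun d =>
    (Classical.choose_spec (step d.1 d.2)).2
  let seq : ℕ → {d : D // 0 < ω d} := fun k => g^[k] ⟨d₀, hd₀⟩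
  have hchain : ∀ k, tail (rev (seq k).1) = tail (seq (k+1)).1 := by
    intro k
    have h1 : seq (k+1) = g (seq k) := Function.iterate_succ_apply' g k _
    rw [h1, hg]
  obtain ⟨a, b, hab, heq⟩ := Finite.exists_ne_map_eq_of_infinite seq
  have hP : ∃ k, 0 < k ∧ ∃ i, seq (i + k) = seq i := by
    rcases Nat.lt_or_ge a b with h | h
    · exact ⟨b - a, by omega, a, by rw [Nat.add_sub_cancel' h.le, heq]⟩
    · have h' : b < a := by omega
      exact ⟨a - b, by omega, b, by rw [Nat.add_sub_cancel' h'.le, heq]⟩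
  classical
  set k₀ := Nat.find hP with hk₀def
  obtain ⟨hk₀pos, i, hi⟩ := Nat.find_spec hP
  set s := k₀ - 1 with hsdef
  have hk₀s : k₀ = s + 1 := by omega
  let f : ℕ → D := fun t => (seq (i + t)).1
  let c : List D := (List.range k₀).map f
  have hmemc : ∀ d ∈ c, 0 < ω d := by
    intro d hd
    obtain ⟨t, _, rfl⟩ := List.mem_map.mp hd
    exact (seq (i + t)).2
  have hcne : c ≠ [] := by
    simp only [c, ne_eq, List.map_eq_nil_iff, List.range_eq_nil]
    omega
  have hnodup : c.Nodup := by
    refine List.Nodup.map_on ?_ (List.nodup_range (n := k₀))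
    intro x hx y hy hxy
    by_contra hne'
    rcases Nat.lt_or_ge x y with h | h
    · have heq2 : seq ((i + x) + (y - x)) = seq (i + x) := by
        have h2 : (i + x) + (y - x) = i + y := by omega
        rw [h2]
        exact (Subtype.ext hxy).symm
      have hlt : y - x < k₀ := by
        have := List.mem_range.mp hy; omega
      exact Nat.find_min hP hlt ⟨by omega, i + x, heq2⟩
    · have h' : y < x := by omega
      have heq2 : seq ((i + y) + (x - y)) = seq (i + y) := by
        have h2 : (i + y) + (x - y) = i + x := by omega
        rw [h2]
        exact Subtype.ext hxy
      have hlt : x - y < k₀ := by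
        have := List.mem_range.mp hx; omega
      exact Nat.find_min hP hlt ⟨by omega, i + y, heq2⟩
  have hnorev : ∀ d ∈ c, rev d ∉ c := by
    intro d hd hrd
    have h1 := hmemc d hd
    have h2 := hmemc _ hrd
    rw [hanti] at h2
    linarith
  have hch : c.Chain' (fun d d' => tail (rev d) = tail d') := by
    simp only [List.Chain']
    rw [List.isChain_map, hk₀s, List.isChain_range_succ]
    intro t _
    have := hchain (i + t)
    simpa [f, Nat.add_assoc] using this
  have hhead : c.head? = some (f 0) := by
    rw [show c = (List.range k₀).map f from rfl, hk₀s, List.range_succ_eq_map]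
    rfl
  have hlast : c.getLast? = some (f s) := by
    rw [show c = (List.range k₀).map f from rfl, hk₀s, List.range_succ, List.map_append]
    simp
  have hclose : ∀ a' ∈ c.head?, ∀ b' ∈ c.getLast?, tail (rev b') = tail a' := by
    intro a' ha' b' hb'
    rw [hhead, Option.mem_def, Option.some_inj] at ha'
    rw [hlast, Option.mem_def, Option.some_inj] at hb'
    subst ha'; subst hb'
    have h1 := hchain (i + s)
    have h2 : i + s + 1 = i + k₀ := by omega
    rw [h2, hi] at h1
    simpa [f] using h1
  have hz := hexact c ⟨hcne, hnodup, hnorev, hch, hclose⟩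
  have hpos : 0 < (c.map fun d => len d * ω d).sum := by
    apply List.sum_pos
    · intro x hx
      obtain ⟨d, hd, rfl⟩ := List.mem_map.mp hx
      exact mul_pos (hlen d) (hmemc d hd)
    · simpa using hcne
  rw [loopIntegral] at hz
  linarith

lemma res_sum_zero (rev : D → D) (tail : D → V) (isLeaf : V → Prop) [DecidablePred isLeaf]
    (hrev : ∀ d, rev (rev d) = d) (hrevne : ∀ d, rev d ≠ d)
    (ω : D → ℝ) (hanti : ∀ d, ω (rev d) = - ω d)
    (hbal : ∀ v, ¬ isLeaf v → ∑ d ∈ univ.filter (fun d => tail d = v), ω d = 0) :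
    ∑ d ∈ univ.filter (fun d => isLeaf (tail d)), ω d = 0 := by
  have htot : ∑ d ∈ (univ : Finset D), ω d = 0 :=
    Finset.sum_ninvolution rev (fun d => by rw [hanti]; ring) (fun d _ => hrevne d)
      (fun d => Finset.mem_univ _) hrev
  have hsplit := Finset.sum_filter_add_sum_filter_not univ (fun d => isLeaf (tail d)) ω
  have hint : ∑ d ∈ univ.filter (fun d => ¬ isLeaf (tail d)), ω d = 0 := by
    have hmaps : ∀ d ∈ univ.filter (fun d => ¬ isLeaf (tail d)),
        tail d ∈ univ.filter (fun v => ¬ isLeaf v) := by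
      intro d hd
      simp only [Finset.mem_filter, Finset.mem_univ, true_and] at hd ⊢
      exact hd
    rw [← Finset.sum_fiberwise_of_maps_to hmaps ω]
    apply Finset.sum_eq_zero
    intro v hv
    simp only [Finset.mem_filter, Finset.mem_univ, true_and] at hv
    have hset : (univ.filter (fun d => ¬ isLeaf (tail d))).filter (fun d => tail d = v)
        = univ.filter (fun d => tail d = v) := by
      ext d
      simp only [Finset.mem_filter, Finset.mem_univ, true_and, and_iff_right_iff_imp]
      intro h; rw [h]; exact hv
    rw [Finset.filter_filter] at hset ⊢
    rw [hset]
    exact hbal v hv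
  linarith [htot, hsplit, hint]

lemma card_leaf_darts (tail : D → V) (isLeaf : V → Prop) [DecidablePred isLeaf] (n : ℕ)
    (hleaf : ∀ v, isLeaf v ↔ (univ.filter fun d => tail d = v).card = 1)
    (hn : (univ.filter fun v => isLeaf v).card = n) :
    Fintype.card {d : D // isLeaf (tail d)} = n := by
  rw [Fintype.card_subtype]
  have hmaps : ∀ d ∈ univ.filter (fun d => isLeaf (tail d)),
      tail d ∈ univ.filter (fun v => isLeaf v) := by
    intro d hd
    simp only [Finset.mem_filter, Finset.mem_univ, true_and] at hd ⊢
    exact hd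
  rw [Finset.card_eq_sum_card_fiberwise hmaps]
  rw [← hn, Finset.card_eq_sum_ones (univ.filter fun v => isLeaf v)]
  apply Finset.sum_congr rfl
  intro v hv
  simp only [Finset.mem_filter, Finset.mem_univ, true_and] at hv
  have hset : (univ.filter (fun d => isLeaf (tail d))).filter (fun d => tail d = v)
      = univ.filter (fun d => tail d = v) := by
    ext d
    simp only [Finset.mem_filter, Finset.mem_univ, true_and, and_iff_right_iff_imp]
    intro h; rw [h]; exact hv
  rw [Finset.filter_filter] at hset ⊢
  rw [hset, (hleaf v).mp hv]

set_option synthInstance.maxHeartbeats 1000000 in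
set_option maxHeartbeats 1000000 in
lemma omega0_finrank (rev : D → D) (tail : D → V) (isLeaf : V → Prop) [DecidablePred isLeaf]
    (len : D → ℝ) (n : ℕ)
    (hrev : ∀ d, rev (rev d) = d) (hrevne : ∀ d, rev d ≠ d)
    (hconn : GraphConnected rev tail)
    (hleaf : ∀ v, isLeaf v ↔ (univ.filter fun d => tail d = v).card = 1)
    (hlen : ∀ d, 0 < len d) (hlensym : ∀ d, len (rev d) = len d)
    (hn : (univ.filter fun v => isLeaf v).card = n) (hn2 : 2 ≤ n) :
    Module.finrank ℝ (Omega0Sub rev tail isLeaf len) = n - 1 := by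
  classical
  have hcardL := card_leaf_darts tail isLeaf n hleaf hn
  -- sum functional on leaf darts
  let S : ({d : D // isLeaf (tail d)} → ℝ) →ₗ[ℝ] ℝ :=
    { toFun := fun x => ∑ d, x d
      map_add' := fun a b => by simp [Finset.sum_add_distrib]
      map_smul' := fun r a => by simp [Finset.mul_sum] }
  have hn0 : (n : ℝ) ≠ 0 := by
    exact_mod_cast (by omega : n ≠ 0)
  have hSsurj : Function.Surjective S := by
    intro r
    refine ⟨fun _ => r / n, ?_⟩
    show ∑ _d : {d : D // isLeaf (tail d)}, r / n = r
    rw [Finset.sum_const, Finset.card_univ, hcardL, nsmul_eq_mul, mul_comm,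
      div_mul_cancel₀ r hn0]
  have hkerS : Module.finrank ℝ (LinearMap.ker S) = n - 1 := by
    have h1 := LinearMap.finrank_range_add_finrank_ker S
    rw [Module.finrank_fintype_fun_eq_card, hcardL,
      LinearMap.range_eq_top.mpr hSsurj, finrank_top, Module.finrank_self] at h1
    omega
  let res : (Omega0Sub rev tail isLeaf len) →ₗ[ℝ] ({d : D // isLeaf (tail d)} → ℝ) :=
    { toFun := fun ω d => ω.1 d.1
      map_add' := fun a b => rfl
      map_smul' := fun r a => rfl }
  have hresker : ∀ ω : Omega0Sub rev tail isLeaf len, res ω ∈ LinearMap.ker S := by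
    intro ω
    rw [LinearMap.mem_ker]
    show ∑ d : {d : D // isLeaf (tail d)}, ω.1 d.1 = 0
    have hmem : IsBalanced rev tail isLeaf ω.1 ∧ IsExact rev tail len ω.1 := ω.2
    have h0 := res_sum_zero rev tail isLeaf hrev hrevne ω.1 hmem.1.1 hmem.1.2
    rw [← h0]
    exact (Finset.sum_subtype _ (by simp) _).symm
  let res' : (Omega0Sub rev tail isLeaf len) →ₗ[ℝ] (LinearMap.ker S) :=
    LinearMap.codRestrict _ res hresker
  have hinj : Function.Injective res' := by
    refine LinearMap.ker_eq_bot.mp (LinearMap.ker_eq_bot'.mpr ?_)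
    intro ω hω
    have hres0 : ∀ d : D, isLeaf (tail d) → ω.1 d = 0 := by
      intro d hd
      have := congrFun (congrArg Subtype.val hω) ⟨d, hd⟩
      simpa [res', res] using this
    have hmem : IsBalanced rev tail isLeaf ω.1 ∧ IsExact rev tail len ω.1 := ω.2
    have hz := balanced_exact_res_zero rev tail isLeaf len hlen ω.1
      hmem.1.1 hmem.1.2 hmem.2 hres0
    exact Subtype.ext hz
  have hub : Module.finrank ℝ (Omega0Sub rev tail isLeaf len) ≤ n - 1 := by
    have h1 := LinearMap.finrank_le_finrank_of_injective hinj
    rwa [hkerS] at h1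
  -- lower bound
  have hnV : n ≤ Fintype.card V := by
    rw [← hn, ← Finset.card_univ]; exact Finset.card_filter_le _ _
  have hcardI : Fintype.card {v : V // ¬ isLeaf v} = Fintype.card V - n := by
    rw [Fintype.card_subtype_compl, Fintype.card_subtype, hn]
  let Lap := lapMap rev tail isLeaf len
  have hH : n ≤ Module.finrank ℝ (LinearMap.ker Lap) := by
    have h1 := LinearMap.finrank_range_add_finrank_ker Lap
    rw [Module.finrank_fintype_fun_eq_card] at h1
    have h2 : Module.finrank ℝ (LinearMap.range Lap) ≤ Fintype.card V - n := by
      have h3 := Submodule.finrank_le (LinearMap.range Lap)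
      rwa [Module.finrank_fintype_fun_eq_card, hcardI] at h3
    omega
  let Φ : (LinearMap.ker Lap) →ₗ[ℝ] (D → ℝ) :=
    (gradMap rev tail len).comp (LinearMap.ker Lap).subtype
  have hrange : LinearMap.range Φ ≤ Omega0Sub rev tail isLeaf len := by
    rintro _ ⟨⟨f, hf⟩, rfl⟩
    have hf' : lapMap rev tail isLeaf len f = 0 := hf
    refine ⟨⟨fun d => ?_, fun v hv => ?_⟩, ?_⟩
    · show (f (tail (rev (rev d))) - f (tail (rev d))) / len (rev d)
        = -((f (tail (rev d)) - f (tail d)) / len d)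
      rw [hrev, hlensym]
      ring
    · have h5 := congrFun hf' ⟨v, hv⟩
      exact h5
    · intro c hc
      obtain ⟨hne, hnd, hnr, hch, hcl⟩ := hc
      match c, hne with
      | d :: t, _ =>
        show ((d :: t).map fun e =>
          len e * ((f (tail (rev e)) - f (tail e)) / len e)).sum = 0
        have hmap : ((d :: t).map fun e => len e * ((f (tail (rev e)) - f (tail e)) / len e))
            = ((d :: t).map fun e => f (tail (rev e)) - f (tail e)) := by
          apply List.map_congr_left
          intro e _
          rw [mul_comm, div_mul_cancel₀ _ (ne_of_gt (hlen e))]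
        rw [hmap, telescope_sum rev tail f t d hch]
        have h2 : (d :: t).getLast? = some ((d :: t).getLast (List.cons_ne_nil _ _)) :=
          List.getLast?_eq_getLast _
        have h3 := hcl d rfl ((d :: t).getLast (List.cons_ne_nil _ _))
          (Option.mem_def.mpr h2)
        rw [h3, sub_self]
  obtain ⟨v₀⟩ : Nonempty V := by
    rw [← Fintype.card_pos_iff]; omega
  let ev : (LinearMap.ker Φ) →ₗ[ℝ] ℝ :=
    { toFun := fun f => f.1.1 v₀
      map_add' := fun a b => rfl
      map_smul' := fun r a => rfl }
  have hevinj : Function.Injective ev := by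
    have hker : ∀ f : LinearMap.ker Φ, ev f = 0 → f = 0 := by
      intro f hf0
      have hgz : ∀ d, f.1.1 (tail (rev d)) = f.1.1 (tail d) := by
        intro d
        have h4 : (f.1.1 (tail (rev d)) - f.1.1 (tail d)) / len d = 0 :=
          congrFun (LinearMap.mem_ker.mp f.2) d
        have h5 := (div_eq_zero_iff.mp h4).resolve_right (ne_of_gt (hlen d))
        linarith
      have hconst : ∀ v w : V, f.1.1 v = f.1.1 w := by
        intro v w
        induction hconn v w with
        | refl => rfl
        | tail h1 h2 ih =>
          obtain ⟨d, hd1, hd2⟩ := h2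
          rw [ih, ← hd1, ← hd2]
          exact (hgz d).symm
      have hzero : f.1.1 = 0 := by
        funext v
        rw [show f.1.1 v = f.1.1 v₀ from hconst v v₀]
        exact hf0
      apply Subtype.ext; apply Subtype.ext; exact hzero
    intro a b hab
    have h6 : ev (a - b) = 0 := by rw [map_sub ev a b, hab, sub_self]
    have h7 := hker (a - b) h6
    exact sub_eq_zero.mp h7
  have hkerΦ : Module.finrank ℝ (LinearMap.ker Φ) ≤ 1 := by
    have h1 := LinearMap.finrank_le_finrank_of_injective hevinj
    rwa [Module.finrank_self] at h1
  have hlb : n - 1 ≤ Module.finrank ℝ (Omega0Sub rev tail isLeaf len) := by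
    have h1 := LinearMap.finrank_range_add_finrank_ker Φ
    have h2 := Submodule.finrank_mono hrange
    omega
  omega

end AuxProof

/-- The space of harmonic tropical morphisms from a simple tropical curve with `n`
leaves to `ℝ^m`, modulo translations of `ℝ^m`, has dimension `m(n−1)`. -/
theorem stmt17 {V D : Type} [Fintype V] [Fintype D] [DecidableEq V] [DecidableEq D]
    (rev : D → D) (tail : D → V) (isLeaf : V → Prop) [DecidablePred isLeaf]
    (len : D → ℝ) (m n : ℕ)
    (hrev : ∀ d, rev (rev d) = d) (hrevne : ∀ d, rev d ≠ d)
    (hconn : GraphConnected rev tail)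
    (hleaf : ∀ v, isLeaf v ↔ (univ.filter fun d => tail d = v).card = 1)
    (htri : ∀ v, ¬ isLeaf v → (univ.filter fun d => tail d = v).card = 3)
    (hlen : ∀ d, 0 < len d) (hlensym : ∀ d, len (rev d) = len d)
    (hn : (univ.filter fun v => isLeaf v).card = n) (hn2 : 2 ≤ n) :
    Module.finrank ℝ (HarmSub rev tail isLeaf len m) = m * (n - 1) := by
  classical
  let e : (HarmSub rev tail isLeaf len m) ≃ₗ[ℝ] (Fin m → (Omega0Sub rev tail isLeaf len)) :=
    { toFun := fun ω j => ⟨fun d => ω.1 d j, ω.2 j⟩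
      invFun := fun g => ⟨fun d j => (g j).1 d, fun j => (g j).2⟩
      map_add' := fun a b => rfl
      map_smul' := fun r a => rfl
      left_inv := fun a => rfl
      right_inv := fun g => rfl }
  rw [e.finrank_eq, Module.finrank_pi_fintype,
    Finset.sum_congr rfl (fun (j : Fin m) _ =>
      omega0_finrank rev tail isLeaf len n hrev hrevne hconn hleaf hlen hlensym hn hn2)]
  simp [Finset.sum_const, mul_comm]
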